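/- For natural numbers k and n, let Sh(k,n) denote the set of (k,n)-shuffles, i.e. permutations σ of {0,1,…,k+n−1} satisfying σ(0) < σ(1) < … < σ(k−1) and σ(k) < σ(k+1) < … < σ(k+n−1). Then the sum of the signs of all (k,n)-shuffles, Σ_{σ ∈ Sh(k,n)} sign(σ) (equivalently, the number of even shuffles minus the number of odd shuffles), equals 0 if k and n are both odd, and equals the binomial coefficient C(⌊(k+n)/2⌋, ⌊k/2⌋) otherwise. -/

import Mathlib

open Finset Equiv

lemma my_sign_eq_signAux {m : ℕ} (f : Equiv.Perm (Fin m)) :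
    Equiv.Perm.sign f = Equiv.Perm.signAux f := by
  rcases lt_or_ge m 2 with hm | hm
  · have hf : f = 1 := by
      ext x
      have h1 := (f x).isLt
      have h2 := x.isLt
      omega
    subst hf
    simp [Equiv.Perm.signAux_one]
  · let s : Equiv.Perm (Fin m) →* ℤˣ := MonoidHom.mk' Equiv.Perm.signAux Equiv.Perm.signAux_mul
    have hs : Function.Surjective s := by
      intro u
      rcases Int.units_eq_one_or u with rfl | rfl
      · exact ⟨1, Equiv.Perm.signAux_one m⟩
      · exact ⟨Equiv.swap ⟨0, by omega⟩ ⟨1, by omega⟩,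
          Equiv.Perm.signAux_swap (by simp [Fin.ext_iff])⟩
    have := Equiv.Perm.eq_sign_of_surjective_hom hs
    rw [← this]
    rfl

lemma my_signAux_eq_pow {m : ℕ} (f : Equiv.Perm (Fin m)) :
    Equiv.Perm.signAux f
      = (-1) ^ ((Equiv.Perm.finPairsLT m).filter fun x => f x.1 ≤ f x.2).card := by
  rw [Equiv.Perm.signAux,
    show (∏ x ∈ Equiv.Perm.finPairsLT m, if f x.1 ≤ f x.2 then (-1 : ℤˣ) else 1)
      = ∏ x ∈ (Equiv.Perm.finPairsLT m).filter fun x => f x.1 ≤ f x.2, (-1 : ℤˣ)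
      from (Finset.prod_filter _ _).symm,
    Finset.prod_const]

lemma shuf_aux {m : ℕ} (A : Finset (Fin m)) : m = A.card + Aᶜ.card := by
  rw [Finset.card_add_card_compl]
  simp

/-- The shuffle permutation associated to a subset `A`: the first `A.card` positions are
mapped increasingly onto `A`, the rest increasingly onto `Aᶜ`. -/
def shuf {m : ℕ} (A : Finset (Fin m)) : Equiv.Perm (Fin m) :=
  (finCongr (shuf_aux A)).trans
    (finSumFinEquiv.symm.trans
      (((A.orderIsoOfFin rfl).toEquiv.sumCongr ((Aᶜ).orderIsoOfFin rfl).toEquiv).trans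
        (((Equiv.refl _).sumCongr (Equiv.subtypeEquivRight (fun x => Finset.mem_compl))).trans
          (Equiv.sumCompl (· ∈ A)))))

lemma shuf_apply_lt {m : ℕ} (A : Finset (Fin m)) (x : Fin m) (hx : (x : ℕ) < A.card) :
    shuf A x = A.orderEmbOfFin rfl ⟨x, hx⟩ := by
  have h1 : (finCongr (shuf_aux A)) x = Fin.castAdd Aᶜ.card ⟨x, hx⟩ := rfl
  unfold shuf
  rw [Equiv.trans_apply, h1, Equiv.trans_apply, finSumFinEquiv_symm_apply_castAdd]
  rfl

lemma shuf_apply_ge {m : ℕ} (A : Finset (Fin m)) (x : Fin m) (hx : A.card ≤ (x : ℕ)) :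
    shuf A x = (Aᶜ).orderEmbOfFin rfl ⟨(x : ℕ) - A.card, by
      have := x.isLt
      have := shuf_aux A
      omega⟩ := by
  have h1 : (finCongr (shuf_aux A)) x
      = Fin.natAdd A.card ⟨(x : ℕ) - A.card, by have := x.isLt; have := shuf_aux A; omega⟩ := by
    apply Fin.ext
    simp [Fin.natAdd]
    omega
  unfold shuf
  rw [Equiv.trans_apply, h1, Equiv.trans_apply, finSumFinEquiv_symm_apply_natAdd]
  rfl

lemma shuf_mem_of_lt {m : ℕ} (A : Finset (Fin m)) (x : Fin m) (hx : (x : ℕ) < A.card) :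
    shuf A x ∈ A := by
  rw [shuf_apply_lt A x hx]
  exact Finset.orderEmbOfFin_mem _ _ _

lemma shuf_mem_compl_of_ge {m : ℕ} (A : Finset (Fin m)) (x : Fin m) (hx : A.card ≤ (x : ℕ)) :
    shuf A x ∈ Aᶜ := by
  rw [shuf_apply_ge A x hx]
  exact Finset.orderEmbOfFin_mem _ _ _

lemma shuf_strictMono_lt {m : ℕ} (A : Finset (Fin m)) (i j : Fin m) (hij : i < j)
    (hj : (j : ℕ) < A.card) : shuf A i < shuf A j := by
  have hi : (i : ℕ) < A.card := lt_trans hij hj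
  rw [shuf_apply_lt A i hi, shuf_apply_lt A j hj]
  exact (A.orderEmbOfFin rfl).strictMono (by exact hij)

lemma shuf_strictMono_ge {m : ℕ} (A : Finset (Fin m)) (i j : Fin m) (hij : i < j)
    (hi : A.card ≤ (i : ℕ)) : shuf A i < shuf A j := by
  have hj : A.card ≤ (j : ℕ) := le_trans hi (le_of_lt hij)
  rw [shuf_apply_ge A i hi, shuf_apply_ge A j hj]
  apply ((Aᶜ).orderEmbOfFin rfl).strictMono
  simp only [Fin.mk_lt_mk]
  omega

lemma card_filter_val_lt (m c : ℕ) (h : c ≤ m) :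
    (Finset.univ.filter fun x : Fin m => (x : ℕ) < c).card = c := by
  apply Finset.card_eq_of_bijective (fun i hi => ⟨i, lt_of_lt_of_le hi h⟩)
  · intro a ha
    simp only [Finset.mem_filter, Finset.mem_univ, true_and] at ha
    exact ⟨a, ha, rfl⟩
  · intro i hi
    simp [hi]
  · intro i j hi hj hEq
    simpa [Fin.ext_iff] using hEq

lemma shuf_image {m : ℕ} (A : Finset (Fin m)) :
    (Finset.univ.filter fun x : Fin m => (x : ℕ) < A.card).image (shuf A) = A := by
  apply Finset.eq_of_subset_of_card_le
  · intro a ha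
    rcases Finset.mem_image.1 ha with ⟨x, hx, rfl⟩
    simp only [Finset.mem_filter, Finset.mem_univ, true_and] at hx
    exact shuf_mem_of_lt A x hx
  · rw [Finset.card_image_of_injective _ (shuf A).injective,
      card_filter_val_lt m A.card (by have := shuf_aux A; omega)]

section ShuffleUnique

variable {m k : ℕ} (σ : Equiv.Perm (Fin m))
  (h1 : ∀ i j : Fin m, i < j → (j : ℕ) < k → σ i < σ j)
  (h2 : ∀ i j : Fin m, i < j → k ≤ (i : ℕ) → σ i < σ j)

lemma shuffle_image_card (hk : k ≤ m) :
    ((Finset.univ.filter fun x : Fin m => (x : ℕ) < k).image σ).card = k := by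
  rw [Finset.card_image_of_injective _ σ.injective, card_filter_val_lt m k hk]

include h1 h2 in
lemma shuffle_eq_shuf (hk : k ≤ m) :
    σ = shuf ((Finset.univ.filter fun x : Fin m => (x : ℕ) < k).image σ) := by
  set A : Finset (Fin m) := (Finset.univ.filter fun x : Fin m => (x : ℕ) < k).image σ with hA
  have hcard : A.card = k := shuffle_image_card σ hk
  have hcc : Aᶜ.card = m - k := by
    have := shuf_aux A
    omega
  ext x
  rcases lt_or_ge (x : ℕ) k with hx | hx
  · have hf : (fun i : Fin A.card => σ ⟨i, by have := i.isLt; omega⟩) = A.orderEmbOfFin rfl := by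
      apply Finset.orderEmbOfFin_unique
      · intro i
        apply Finset.mem_image.2
        exact ⟨⟨i, by have := i.isLt; omega⟩,
          Finset.mem_filter.2 ⟨Finset.mem_univ _, by show (i : ℕ) < k; have := i.isLt; omega⟩,
          rfl⟩
      · intro i j hij
        refine h1 _ _ (by simp only [Fin.mk_lt_mk]; exact hij) ?_
        show (j : ℕ) < k
        have := j.isLt
        omega
    rw [shuf_apply_lt A x (by omega), ← hf]
  · have hf : (fun i : Fin Aᶜ.card => σ ⟨k + i, by have := i.isLt; omega⟩)
        = (Aᶜ).orderEmbOfFin rfl := by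
      apply Finset.orderEmbOfFin_unique
      · intro i
        apply Finset.mem_compl.2
        intro hmem
        rcases Finset.mem_image.1 hmem with ⟨y, hy, hy2⟩
        have hyk : (y : ℕ) < k := (Finset.mem_filter.1 hy).2
        have : y = ⟨k + i, by have := i.isLt; omega⟩ := σ.injective hy2
        rw [this] at hyk
        simp only at hyk
        omega
      · intro i j hij
        refine h2 _ _ ?_ ?_
        · simp only [Fin.mk_lt_mk]
          have : (i : ℕ) < (j : ℕ) := hij
          omega
        · show k ≤ k + (i : ℕ)
          omega
    rw [shuf_apply_ge A x (by omega), ← hf]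
    refine congrArg (fun y : Fin m => ((σ y : Fin m) : ℕ)) (Fin.ext ?_)
    show (x : ℕ) = k + ((x : ℕ) - A.card)
    omega

include h1 h2 in
lemma shuffle_inv_card (hk : k ≤ m) :
    ((Equiv.Perm.finPairsLT m).filter fun x => σ x.1 ≤ σ x.2).card
      = (((((Finset.univ.filter fun x : Fin m => (x : ℕ) < k).image σ) ×ˢ
          ((Finset.univ.filter fun x : Fin m => (x : ℕ) < k).image σ)ᶜ).filter
            fun p => p.2 < p.1)).card := by
  set A : Finset (Fin m) := (Finset.univ.filter fun x : Fin m => (x : ℕ) < k).image σ with hA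
  have hmemA : ∀ y : Fin m, σ y ∈ A ↔ (y : ℕ) < k := by
    intro y
    constructor
    · intro hy
      rcases Finset.mem_image.1 hy with ⟨z, hz, hz2⟩
      have hzk : (z : ℕ) < k := (Finset.mem_filter.1 hz).2
      rwa [← σ.injective hz2]
    · intro hy
      exact Finset.mem_image.2 ⟨y, Finset.mem_filter.2 ⟨Finset.mem_univ _, hy⟩, rfl⟩
  apply Finset.card_bij' (fun x _ => (σ x.2, σ x.1))
    (fun p _ => ⟨σ.symm p.2, σ.symm p.1⟩)
  · rintro ⟨x1, x2⟩ _
    simp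
  · rintro ⟨a, b⟩ _
    simp
  · rintro ⟨x1, x2⟩ hx
    simp only [Finset.mem_filter, Equiv.Perm.mem_finPairsLT] at hx
    obtain ⟨hlt, hle⟩ := hx
    have hx2k : (x2 : ℕ) < k := by
      by_contra hc
      push_neg at hc
      exact absurd hle (not_le.2 (h2 x2 x1 hlt hc))
    have hx1k : k ≤ (x1 : ℕ) := by
      by_contra hc
      push_neg at hc
      exact absurd hle (not_le.2 (h1 x2 x1 hlt hc))
    simp only [Finset.mem_filter, Finset.mem_product]
    refine ⟨⟨(hmemA x2).2 hx2k, Finset.mem_compl.2 fun hc => ?_⟩, ?_⟩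
    · have := (hmemA x1).1 hc
      omega
    · exact lt_of_le_of_ne hle fun hc => absurd (σ.injective hc) (ne_of_gt hlt)
  · rintro ⟨a, b⟩ hp
    simp only [Finset.mem_filter, Finset.mem_product, Finset.mem_compl] at hp
    obtain ⟨⟨ha, hb⟩, hba⟩ := hp
    have hsa : ((σ.symm a : Fin m) : ℕ) < k := by
      apply (hmemA (σ.symm a)).1
      rwa [Equiv.apply_symm_apply]
    have hsb : k ≤ ((σ.symm b : Fin m) : ℕ) := by
      by_contra hc
      push_neg at hc
      have := (hmemA (σ.symm b)).2 hc
      rw [Equiv.apply_symm_apply] at this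
      exact hb this
    simp only [Finset.mem_filter, Equiv.Perm.mem_finPairsLT]
    refine ⟨by simp only [Fin.lt_iff_val_lt_val]; omega, ?_⟩
    simp only [Equiv.apply_symm_apply]
    exact le_of_lt hba

end ShuffleUnique

open Finset

/-- inversion count between two finsets of naturals -/
def invCount (B C : Finset ℕ) : ℕ := ((B ×ˢ C).filter fun p => p.2 < p.1).card

def gsum (m k : ℕ) : ℤ := ∑ B ∈ (range m).powersetCard k, (-1 : ℤ) ^ invCount B (range m \ B)

def F (k n : ℕ) : ℤ := if Odd k ∧ Odd n then 0 else (Nat.choose ((k + n) / 2) (k / 2) : ℤ)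

lemma gsum_zero (m : ℕ) : gsum m 0 = 1 := by
  simp [gsum, invCount]

lemma gsum_of_lt {m k : ℕ} (h : m < k) : gsum m k = 0 := by
  rw [gsum, Finset.powersetCard_eq_empty.2 (by simpa using h), Finset.sum_empty]

lemma invCount_not_mem {B : Finset ℕ} {m : ℕ} (hB : B ⊆ range m) :
    invCount B (range (m + 1) \ B) = invCount B (range m \ B) := by
  unfold invCount
  congr 1
  ext p
  simp only [mem_filter, mem_product, mem_sdiff, mem_range]
  constructor
  · rintro ⟨⟨h1, h2, h3⟩, h4⟩
    exact ⟨⟨h1, by have := mem_range.1 (hB h1); omega, h3⟩, h4⟩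
  · rintro ⟨⟨h1, h2, h3⟩, h4⟩
    exact ⟨⟨h1, by omega, h3⟩, h4⟩

lemma invCount_insert {B : Finset ℕ} {m : ℕ} (hB : B ⊆ range m) (hm : m ∉ B) :
    invCount (insert m B) (range (m + 1) \ insert m B)
      = invCount B (range m \ B) + (m - B.card) := by
  have hC : range (m + 1) \ insert m B = range m \ B := by
    ext x
    simp only [mem_sdiff, mem_range, mem_insert]
    constructor
    · rintro ⟨h1, h2⟩
      push_neg at h2
      exact ⟨by omega, h2.2⟩
    · rintro ⟨h1, h2⟩
      exact ⟨by omega, by push_neg; exact ⟨by omega, h2⟩⟩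
  rw [hC]
  unfold invCount
  have hsplit : ((insert m B ×ˢ (range m \ B)).filter fun p => p.2 < p.1)
      = (({m} ×ˢ (range m \ B)).filter fun p => p.2 < p.1)
        ∪ ((B ×ˢ (range m \ B)).filter fun p => p.2 < p.1) := by
    ext p
    simp only [mem_filter, mem_product, mem_insert, mem_union, mem_singleton]
    tauto
  rw [hsplit, Finset.card_union_of_disjoint]
  · have h1 : (({m} ×ˢ (range m \ B)).filter fun p => p.2 < p.1) = {m} ×ˢ (range m \ B) := by
      apply Finset.filter_true_of_mem
      rintro p hp
      simp only [mem_product, mem_singleton, mem_sdiff, mem_range] at hp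
      omega
    rw [h1, Finset.card_product, Finset.card_singleton, one_mul,
      Finset.card_sdiff_of_subset hB, Finset.card_range]
    ring
  · rw [Finset.disjoint_left]
    rintro p hp hp'
    simp only [mem_filter, mem_product, mem_singleton] at hp hp'
    exact hm (hp.1.1 ▸ hp'.1.1)

lemma gsum_succ (m k : ℕ) :
    gsum (m + 1) (k + 1) = gsum m (k + 1) + (-1 : ℤ) ^ (m - k) * gsum m k := by
  have hm : m ∉ range m := by simp
  have hins : range (m + 1) = insert m (range m) := by
    rw [Finset.range_add_one]
  rw [gsum, hins, Finset.powersetCard_succ_insert hm]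
  rw [Finset.sum_union]
  · congr 1
    · rw [gsum]
      apply Finset.sum_congr rfl
      intro B hB
      rw [Finset.mem_powersetCard] at hB
      rw [← hins, invCount_not_mem hB.1]
    · rw [Finset.sum_image]
      · rw [gsum, Finset.mul_sum]
        apply Finset.sum_congr rfl
        intro B hB
        rw [Finset.mem_powersetCard] at hB
        have hmB : m ∉ B := fun h => hm (hB.1 h)
        rw [← hins, invCount_insert hB.1 hmB, pow_add, hB.2]
        ring
      · intro B hB B' hB' hEq
        rw [Finset.mem_coe, Finset.mem_powersetCard] at hB hB'
        have hmB : m ∉ B := fun h => hm (hB.1 h)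
        have hmB' : m ∉ B' := fun h => hm (hB'.1 h)
        have := congrArg (Finset.erase · m) hEq
        simpa [Finset.erase_insert hmB, Finset.erase_insert hmB'] using this
  · rw [Finset.disjoint_left]
    intro B hB hB'
    rw [Finset.mem_powersetCard] at hB
    rcases Finset.mem_image.1 hB' with ⟨C, hC, rfl⟩
    exact hm (hB.1 (Finset.mem_insert_self m C))

lemma F_rec (k n : ℕ) : F (k + 1) (n + 1) = F (k + 1) n + (-1 : ℤ) ^ (n + 1) * F k (n + 1) := by
  have hneg : ∀ c : ℕ, (-1 : ℤ) ^ (2 * c + 1) = -1 := fun c => by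
    rw [pow_succ, pow_mul]; norm_num
  have hpos : ∀ c : ℕ, (-1 : ℤ) ^ (2 * c + 1 + 1) = 1 := fun c => by
    rw [pow_succ, hneg]; norm_num
  rcases Nat.even_or_odd k with ⟨a, rfl⟩ | ⟨a, rfl⟩ <;>
    rcases Nat.even_or_odd n with ⟨b, rfl⟩ | ⟨b, rfl⟩ <;>
    (try rw [show a + a = 2 * a from by ring]) <;>
    (try rw [show b + b = 2 * b from by ring]) <;>
    simp only [F, Nat.odd_iff]
  · -- k = 2a, n = 2b
    have h1 : (2 * a + 1) % 2 = 1 := by omega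
    have h2 : (2 * b) % 2 = 0 := by omega
    have h3 : (2 * b + 1) % 2 = 1 := by omega
    have e2 : (2 * a + 1 + 2 * b) / 2 = a + b := by omega
    have e3 : (2 * a + (2 * b + 1)) / 2 = a + b := by omega
    have e4 : (2 * a + 1) / 2 = a := by omega
    have e5 : (2 * a) / 2 = a := by omega
    simp only [h1, h2, h3, e2, e3, e4, e5, hneg b]
    norm_num
  · -- k = 2a, n = 2b+1
    have h1 : (2 * a + 1) % 2 = 1 := by omega
    have h2 : (2 * b + 1 + 1) % 2 = 0 := by omega
    have h3 : (2 * b + 1) % 2 = 1 := by omega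
    have e1 : (2 * a + 1 + (2 * b + 1 + 1)) / 2 = a + b + 1 := by omega
    have e3 : (2 * a + (2 * b + 1 + 1)) / 2 = a + b + 1 := by omega
    have e4 : (2 * a + 1) / 2 = a := by omega
    have e5 : (2 * a) / 2 = a := by omega
    simp only [h1, h2, h3, e1, e3, e4, e5, hpos b]
    norm_num
  · -- k = 2a+1, n = 2b
    have h1 : (2 * a + 1 + 1) % 2 = 0 := by omega
    have h3 : (2 * b + 1) % 2 = 1 := by omega
    have h4 : (2 * a + 1) % 2 = 1 := by omega
    have e1 : (2 * a + 1 + 1 + (2 * b + 1)) / 2 = a + b + 1 := by omega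
    have e2 : (2 * a + 1 + 1 + 2 * b) / 2 = a + b + 1 := by omega
    have e4 : (2 * a + 1 + 1) / 2 = a + 1 := by omega
    simp only [h1, h3, h4, e1, e2, e4, hneg b]
    norm_num
  · -- k = 2a+1, n = 2b+1
    have h1 : (2 * a + 1 + 1) % 2 = 0 := by omega
    have h2 : (2 * b + 1 + 1) % 2 = 0 := by omega
    have h3 : (2 * b + 1) % 2 = 1 := by omega
    have h4 : (2 * a + 1) % 2 = 1 := by omega
    have e1 : (2 * a + 1 + 1 + (2 * b + 1 + 1)) / 2 = a + b + 2 := by omega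
    have e2 : (2 * a + 1 + 1 + (2 * b + 1)) / 2 = a + b + 1 := by omega
    have e3 : (2 * a + 1 + (2 * b + 1 + 1)) / 2 = a + b + 1 := by omega
    have e4 : (2 * a + 1 + 1) / 2 = a + 1 := by omega
    have e5 : (2 * a + 1) / 2 = a := by omega
    simp only [h1, h2, h3, h4, e1, e2, e3, e4, e5, hpos b]
    norm_num
    have := Nat.choose_succ_succ (a + b + 1) a
    push_cast [this]
    ring

lemma gsum_eq_F : ∀ m k n : ℕ, k + n = m → gsum m k = F k n := by
  intro m
  induction m with
  | zero =>
    rintro k n h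
    obtain ⟨rfl, rfl⟩ : k = 0 ∧ n = 0 := by omega
    simp [gsum_zero, F]
  | succ m ih =>
    rintro k n h
    cases k with
    | zero =>
      rw [gsum_zero]
      simp only [F, Nat.odd_iff]
      norm_num
    | succ k =>
      cases n with
      | zero =>
        rw [gsum_succ, gsum_of_lt (by omega), ih k 0 (by omega)]
        have hmk : m - k = 0 := by omega
        have : F k 0 = 1 := by
          simp only [F, Nat.odd_iff]
          norm_num [Nat.choose_self]
        have h2 : F (k+1) 0 = 1 := by
          simp only [F, Nat.odd_iff]
          norm_num [Nat.choose_self]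
        rw [hmk, this, h2]
        ring
      | succ n =>
        rw [gsum_succ, ih (k+1) n (by omega), ih k (n+1) (by omega),
          F_rec]
        have : m - k = n + 1 := by omega
        rw [this]

lemma filter_val_mem_image {m : ℕ} (B : Finset ℕ) (hB : B ⊆ Finset.range m) :
    (Finset.univ.filter fun x : Fin m => (x : ℕ) ∈ B).image Fin.val = B := by
  ext b
  simp only [Finset.mem_image, Finset.mem_filter, Finset.mem_univ, true_and]
  constructor
  · rintro ⟨x, hx, rfl⟩
    exact hx
  · intro hb
    exact ⟨⟨b, Finset.mem_range.1 (hB hb)⟩, hb, rfl⟩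

lemma image_val_filter {m : ℕ} (A : Finset (Fin m)) :
    (Finset.univ.filter fun x : Fin m => (x : ℕ) ∈ A.image Fin.val) = A := by
  ext x
  simp only [Finset.mem_filter, Finset.mem_univ, true_and, Finset.mem_image]
  constructor
  · rintro ⟨y, hy, hyx⟩
    rwa [← Fin.val_injective hyx]
  · intro hx
    exact ⟨x, hx, rfl⟩

lemma NFin_eq_invCount {m : ℕ} (A : Finset (Fin m)) :
    ((A ×ˢ Aᶜ).filter fun p => p.2 < p.1).card
      = invCount (A.image Fin.val) (Finset.range m \ A.image Fin.val) := by
  unfold invCount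
  have hinj : Function.Injective (Prod.map Fin.val Fin.val : Fin m × Fin m → ℕ × ℕ) := by
    rintro ⟨x1, y1⟩ ⟨x2, y2⟩ h
    simp only [Prod.map, Prod.mk.injEq] at h
    exact Prod.ext (Fin.val_injective h.1) (Fin.val_injective h.2)
  rw [← Finset.card_image_of_injective _ hinj]
  congr 1
  ext ⟨a, b⟩
  simp only [Finset.mem_image, Finset.mem_filter, Finset.mem_product, Finset.mem_compl,
    Finset.mem_sdiff, Finset.mem_range, Prod.map, Prod.mk.injEq, Prod.exists]
  constructor
  · rintro ⟨x, y, ⟨⟨hx, hy⟩, hlt⟩, hxa, hyb⟩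
    subst hxa
    subst hyb
    refine ⟨⟨⟨x, hx, rfl⟩, y.isLt, ?_⟩, hlt⟩
    rintro ⟨z, hz, hzv⟩
    exact hy (by rwa [← Fin.val_injective hzv])
  · rintro ⟨⟨⟨x, hx, rfl⟩, hbm, hbA⟩, hlt⟩
    refine ⟨x, ⟨b, hbm⟩, ⟨⟨hx, fun hc => hbA ⟨_, hc, rfl⟩⟩, hlt⟩, rfl, rfl⟩


/-- The sum of the signs of all `(k,n)`-shuffles (permutations `σ` of
`{0,…,k+n-1}` increasing on the first `k` and on the last `n` indices) equals `0` if `k`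
and `n` are both odd, and equals `C(⌊(k+n)/2⌋, ⌊k/2⌋)` otherwise.  (This is the value at
`q = -1` of the quantum binomial coefficient, the coefficient appearing in the horizontal
differential of the diagram complex for odd ambient dimension.) -/
theorem signed_shuffle_count (k n : ℕ) :
    (∑ σ ∈ Finset.univ.filter (fun σ : Equiv.Perm (Fin (k + n)) =>
        (∀ i j : Fin (k + n), i < j → (j : ℕ) < k → σ i < σ j) ∧
        (∀ i j : Fin (k + n), i < j → k ≤ (i : ℕ) → σ i < σ j)),
      (Equiv.Perm.sign σ : ℤ)) =
    if Odd k ∧ Odd n then 0 else (Nat.choose ((k + n) / 2) (k / 2) : ℤ) := by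
  have hk : k ≤ k + n := Nat.le_add_right k n
  have step1 : (∑ σ ∈ Finset.univ.filter (fun σ : Equiv.Perm (Fin (k + n)) =>
        (∀ i j : Fin (k + n), i < j → (j : ℕ) < k → σ i < σ j) ∧
        (∀ i j : Fin (k + n), i < j → k ≤ (i : ℕ) → σ i < σ j)),
      (Equiv.Perm.sign σ : ℤ))
      = ∑ A ∈ Finset.powersetCard k (Finset.univ : Finset (Fin (k + n))),
          (-1 : ℤ) ^ ((A ×ˢ Aᶜ).filter fun p => p.2 < p.1).card := by
    refine Finset.sum_bij'
      (fun σ _ => (Finset.univ.filter fun x : Fin (k + n) => (x : ℕ) < k).image σ)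
      (fun A _ => shuf A) ?_ ?_ ?_ ?_ ?_
    · intro σ hσ
      exact Finset.mem_powersetCard_univ.2 (shuffle_image_card σ hk)
    · intro A hA
      have hA' : A.card = k := Finset.mem_powersetCard_univ.1 hA
      simp only [Finset.mem_filter, Finset.mem_univ, true_and]
      constructor
      · intro i j hij hjk
        exact shuf_strictMono_lt A i j hij (by omega)
      · intro i j hij hik
        exact shuf_strictMono_ge A i j hij (by omega)
    · intro σ hσ
      simp only [Finset.mem_filter, Finset.mem_univ, true_and] at hσ
      exact (shuffle_eq_shuf σ hσ.1 hσ.2 hk).symm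
    · intro A hA
      have hA' : A.card = k := Finset.mem_powersetCard_univ.1 hA
      have hfil : (Finset.univ.filter fun x : Fin (k + n) => (x : ℕ) < k)
          = (Finset.univ.filter fun x : Fin (k + n) => (x : ℕ) < A.card) := by rw [hA']
      show (Finset.univ.filter fun x : Fin (k + n) => (x : ℕ) < k).image (shuf A) = A
      rw [hfil]
      exact shuf_image A
    · intro σ hσ
      simp only [Finset.mem_filter, Finset.mem_univ, true_and] at hσ
      rw [my_sign_eq_signAux, my_signAux_eq_pow, shuffle_inv_card σ hσ.1 hσ.2 hk]
      push_cast
      norm_num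
  have step2 : (∑ A ∈ Finset.powersetCard k (Finset.univ : Finset (Fin (k + n))),
          (-1 : ℤ) ^ ((A ×ˢ Aᶜ).filter fun p => p.2 < p.1).card)
      = gsum (k + n) k := by
    rw [gsum]
    refine Finset.sum_bij' (fun A _ => A.image Fin.val)
      (fun B _ => Finset.univ.filter fun x : Fin (k + n) => (x : ℕ) ∈ B) ?_ ?_ ?_ ?_ ?_
    · intro A hA
      rw [Finset.mem_powersetCard]
      constructor
      · intro b hb
        rcases Finset.mem_image.1 hb with ⟨x, _, rfl⟩
        exact Finset.mem_range.2 x.isLt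
      · rw [Finset.card_image_of_injective _ Fin.val_injective,
          Finset.mem_powersetCard_univ.1 hA]
    · intro B hB
      rw [Finset.mem_powersetCard] at hB
      apply Finset.mem_powersetCard_univ.2
      rw [← Finset.card_image_of_injective _ Fin.val_injective,
        filter_val_mem_image B hB.1, hB.2]
    · intro A _
      exact image_val_filter A
    · intro B hB
      rw [Finset.mem_powersetCard] at hB
      exact filter_val_mem_image B hB.1
    · intro A _
      rw [NFin_eq_invCount]
  rw [step1, step2, gsum_eq_F (k + n) k n rfl]
  rfl
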